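/- arXiv:math/0304249 — 2 statements merged into one kernel-verified Lean document; each statement's English description precedes it below -/
import Mathlib

section
/- For indeterminates $X_1,\dots,X_r$, $A$, $B$ and base $q$, the determinant $\det_{1\le i,j\le r}\left(X_i^{r-j}\frac{(A/X_i;q)_{r-j}}{(BX_i;q)_{r-j}}\right)$ equals $\prod_{1\le i<j\le r}(X_i-X_j)\prod_{i=1}^r\frac{(ABq^{2r-2i};q)_{i-1}}{(BX_i;q)_{r-1}}$. -/
open Finset

/-- The $q$-shifted factorial $(a;q)_k = \prod_{j=0}^{k-1}(1-aq^j)$. -/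
noncomputable def qp (q a : ℂ) (k : ℕ) : ℂ := ∏ j ∈ Finset.range k, (1 - a * q ^ j)

namespace Stmt1

open Polynomial

lemma qp_split (q a : ℂ) {m n : ℕ} (h : m ≤ n) :
    qp q a n = qp q a m * ∏ s ∈ Finset.Ico m n, (1 - a * q ^ s) := by
  unfold qp
  rw [Finset.range_eq_Ico, Finset.range_eq_Ico]
  exact (Finset.prod_Ico_consecutive (fun s => 1 - a * q ^ s) (Nat.zero_le m) h).symm

noncomputable def ent (r : ℕ) (A B q x : ℂ) (j : ℕ) : ℂ :=
  (∏ s ∈ Finset.range (r - 1 - j), (x - A * q ^ s)) *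
    ∏ s ∈ Finset.Ico (r - 1 - j) (r - 1), (1 - B * x * q ^ s)

noncomputable def pp (r : ℕ) (A B q : ℂ) (j : ℕ) : Polynomial ℂ :=
  (∏ s ∈ Finset.range (r - 1 - j), (Polynomial.X - Polynomial.C (A * q ^ s))) *
    ∏ s ∈ Finset.Ico (r - 1 - j) (r - 1), (1 - Polynomial.C (B * q ^ s) * Polynomial.X)

lemma pp_eval (r : ℕ) (A B q x : ℂ) (j : ℕ) : (pp r A B q j).eval x = ent r A B q x j := by
  simp only [pp, ent, eval_mul, eval_prod, eval_sub, eval_X, eval_C, eval_one, eval_pow]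
  congr 1
  exact Finset.prod_congr rfl fun s _ => by ring

lemma pp_natDegree_lt (r : ℕ) (A B q : ℂ) {j : ℕ} (hj : j < r) :
    (pp r A B q j).natDegree < r := by
  have h1 : (∏ s ∈ Finset.range (r - 1 - j), (Polynomial.X - Polynomial.C (A * q ^ s))).natDegree
      ≤ r - 1 - j := by
    refine le_trans (Polynomial.natDegree_prod_le _ _) ?_
    have : ∀ s ∈ Finset.range (r - 1 - j),
        (Polynomial.X - Polynomial.C (A * q ^ s)).natDegree ≤ 1 :=
      fun s _ => le_of_eq (Polynomial.natDegree_X_sub_C _)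
    calc ∑ s ∈ Finset.range (r - 1 - j), (Polynomial.X - Polynomial.C (A * q ^ s)).natDegree
        ≤ ∑ _s ∈ Finset.range (r - 1 - j), 1 := by exact Finset.sum_le_sum this
      _ = r - 1 - j := by simp
  have h2 : (∏ s ∈ Finset.Ico (r - 1 - j) (r - 1),
      (1 - Polynomial.C (B * q ^ s) * Polynomial.X)).natDegree ≤ j := by
    refine le_trans (Polynomial.natDegree_prod_le _ _) ?_
    have : ∀ s ∈ Finset.Ico (r - 1 - j) (r - 1),
        (1 - Polynomial.C (B * q ^ s) * Polynomial.X).natDegree ≤ 1 := by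
      intro s _
      refine le_trans (Polynomial.natDegree_sub_le _ _) ?_
      simp only [Polynomial.natDegree_one, max_le_iff]
      refine ⟨Nat.zero_le _, le_trans (Polynomial.natDegree_C_mul_le _ _) ?_⟩
      simp
    calc ∑ s ∈ Finset.Ico (r - 1 - j) (r - 1),
          (1 - Polynomial.C (B * q ^ s) * Polynomial.X).natDegree
        ≤ ∑ _s ∈ Finset.Ico (r - 1 - j) (r - 1), 1 := by exact Finset.sum_le_sum this
      _ ≤ j := by simp [Nat.card_Ico]; omega
  have h3 := Polynomial.natDegree_mul_le (p := ∏ s ∈ Finset.range (r - 1 - j),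
    (Polynomial.X - Polynomial.C (A * q ^ s))) (q := ∏ s ∈ Finset.Ico (r - 1 - j) (r - 1),
    (1 - Polynomial.C (B * q ^ s) * Polynomial.X))
  unfold pp
  omega

noncomputable def Vprod (r : ℕ) (Y : Fin r → ℂ) : ℂ :=
  ∏ i : Fin r, ∏ j ∈ Finset.Ioi i, (Y i - Y j)

noncomputable def sgn (r : ℕ) : ℂ := ∏ i : Fin r, ∏ _j ∈ Finset.Ioi i, (-1 : ℂ)

lemma sgn_mul_sgn (r : ℕ) : sgn r * sgn r = 1 := by
  unfold sgn
  rw [← Finset.prod_mul_distrib]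
  rw [Finset.prod_congr rfl fun (i : Fin r) _ => (Finset.prod_mul_distrib
    (f := fun _ => (-1:ℂ)) (g := fun _ => (-1:ℂ))).symm]
  simp

lemma Vprod_eq_sgn_det (r : ℕ) (Y : Fin r → ℂ) :
    Vprod r Y = sgn r * (Matrix.vandermonde Y).det := by
  rw [Matrix.det_vandermonde, sgn, Vprod, ← Finset.prod_mul_distrib]
  refine Finset.prod_congr rfl fun i _ => ?_
  rw [← Finset.prod_mul_distrib]
  exact Finset.prod_congr rfl fun j _ => by ring

lemma det_eval_eq (r : ℕ) (A B q : ℂ) (Y : Fin r → ℂ) :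
    Matrix.det (Matrix.of fun i j : Fin r => (pp r A B q j.1).eval (Y i))
      = (Matrix.vandermonde Y).det *
        Matrix.det (Matrix.of fun k j : Fin r => (pp r A B q j.1).coeff k.1) := by
  rw [← Matrix.det_mul]
  congr 1
  ext i j
  rw [Matrix.mul_apply]
  simp only [Matrix.of_apply, Matrix.vandermonde_apply]
  rw [Polynomial.eval_eq_sum_range' (pp_natDegree_lt r A B q j.isLt) (Y i)]
  rw [← Fin.sum_univ_eq_sum_range (fun k => (pp r A B q j.1).coeff k * Y i ^ k) r]
  exact Finset.sum_congr rfl fun k _ => by ring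

lemma key_generic (r : ℕ) (A B q : ℂ) (hA : A ≠ 0)
    (hq : ∀ i j : Fin r, i < j → q ^ (r - 1 - j.1) ≠ q ^ (r - 1 - i.1))
    (X : Fin r → ℂ) :
    Matrix.det (Matrix.of fun i j : Fin r => ent r A B q (X i) j.1)
      = Vprod r X * ∏ i : Fin r, qp q (A * B * q ^ (2 * r - 2 * (i.1 + 1))) i.1 := by
  set Rq := ∏ i : Fin r, qp q (A * B * q ^ (2 * r - 2 * (i.1 + 1))) i.1 with hRq
  set Y0 : Fin r → ℂ := fun i => A * q ^ (r - 1 - i.1) with hY0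
  set Cm := Matrix.of fun k j : Fin r => (pp r A B q j.1).coeff k.1 with hCm
  have htri : Matrix.det (Matrix.of fun i j : Fin r => (pp r A B q j.1).eval (Y0 i))
      = ∏ i : Fin r, (pp r A B q i.1).eval (Y0 i) := by
    apply Matrix.det_of_upperTriangular
    intro i j hji
    have hji' : j.1 < i.1 := hji
    have hmem : r - 1 - i.1 ∈ Finset.range (r - 1 - j.1) := by
      rw [Finset.mem_range]
      have := i.isLt
      omega
    simp only [Matrix.of_apply, pp, Polynomial.eval_mul, Polynomial.eval_prod]
    rw [Finset.prod_eq_zero hmem (by simp [hY0]), zero_mul]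
  have hdiag : ∀ i : Fin r, (pp r A B q i.1).eval (Y0 i)
      = (∏ s ∈ Finset.range (r - 1 - i.1), (Y0 i - A * q ^ s)) *
          qp q (A * B * q ^ (2 * r - 2 * (i.1 + 1))) i.1 := by
    intro i
    simp only [pp, Polynomial.eval_mul, Polynomial.eval_prod, Polynomial.eval_sub,
      Polynomial.eval_X, Polynomial.eval_C, Polynomial.eval_one]
    congr 1
    rw [Finset.prod_Ico_eq_prod_range]
    have hc : r - 1 - (r - 1 - i.1) = i.1 := by
      have := i.isLt; omega
    rw [hc]
    unfold qp
    refine Finset.prod_congr rfl fun t _ => ?_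
    have harith : (r - 1 - i.1) + (r - 1 - i.1) = 2 * r - 2 * (i.1 + 1) := by
      have := i.isLt; omega
    congr 1
    rw [← harith, pow_add, pow_add, hY0]
    ring
  have hVY0 : ∀ i : Fin r, (∏ j ∈ Finset.Ioi i, (Y0 i - Y0 j))
      = ∏ s ∈ Finset.range (r - 1 - i.1), (Y0 i - A * q ^ s) := by
    intro i
    have hr : 0 < r := i.pos
    refine Finset.prod_nbij' (fun j => r - 1 - j.1) (fun s => (⟨r - 1 - s, by omega⟩ : Fin r))
      ?_ ?_ ?_ ?_ ?_
    · intro j hj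
      rw [Finset.mem_range]
      rw [Finset.mem_Ioi] at hj
      show r - 1 - j.1 < r - 1 - i.1
      have h1 : i.1 < j.1 := hj
      have := j.isLt
      omega
    · intro s hs
      rw [Finset.mem_range] at hs
      rw [Finset.mem_Ioi]
      show i.1 < r - 1 - s
      omega
    · intro j hj
      rw [Finset.mem_Ioi] at hj
      have h1 : i.1 < j.1 := hj
      have := j.isLt
      apply Fin.ext
      show r - 1 - (r - 1 - j.1) = j.1
      omega
    · intro s hs
      rw [Finset.mem_range] at hs
      show r - 1 - (r - 1 - s) = s
      omega
    · intro j _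
      rfl
  have e1 : (Matrix.vandermonde Y0).det * Cm.det = Vprod r Y0 * Rq := by
    rw [← det_eval_eq, htri]
    calc ∏ i : Fin r, (pp r A B q i.1).eval (Y0 i)
        = ∏ i : Fin r, ((∏ s ∈ Finset.range (r - 1 - i.1), (Y0 i - A * q ^ s)) *
            qp q (A * B * q ^ (2 * r - 2 * (i.1 + 1))) i.1) :=
          Finset.prod_congr rfl fun i _ => hdiag i
      _ = (∏ i : Fin r, ∏ s ∈ Finset.range (r - 1 - i.1), (Y0 i - A * q ^ s)) * Rq :=
          Finset.prod_mul_distrib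
      _ = Vprod r Y0 * Rq := by
          rw [Vprod]
          congr 1
          exact (Finset.prod_congr rfl fun i _ => (hVY0 i)).symm
  have hV0ne : Vprod r Y0 ≠ 0 := by
    rw [Vprod]
    rw [Finset.prod_ne_zero_iff]
    intro i _
    rw [Finset.prod_ne_zero_iff]
    intro j hj
    rw [Finset.mem_Ioi] at hj
    refine sub_ne_zero_of_ne fun h => ?_
    exact hq i j hj (mul_left_cancel₀ hA h).symm
  have hsd : sgn r * Vprod r Y0 = (Matrix.vandermonde Y0).det := by
    rw [Vprod_eq_sgn_det, ← mul_assoc, sgn_mul_sgn, one_mul]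
  have e2 : Vprod r Y0 * (sgn r * Cm.det) = Vprod r Y0 * Rq := by
    calc Vprod r Y0 * (sgn r * Cm.det) = (sgn r * Vprod r Y0) * Cm.det := by ring
      _ = (Matrix.vandermonde Y0).det * Cm.det := by rw [hsd]
      _ = Vprod r Y0 * Rq := e1
  have hCmdet : sgn r * Cm.det = Rq := mul_left_cancel₀ hV0ne e2
  have hCmdet' : Cm.det = sgn r * Rq := by
    rw [← hCmdet, ← mul_assoc, sgn_mul_sgn, one_mul]
  have heval : (Matrix.of fun i j : Fin r => ent r A B q (X i) j.1)
      = Matrix.of fun i j : Fin r => (pp r A B q j.1).eval (X i) := by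
    ext i j
    simp [pp_eval]
  rw [heval, det_eval_eq, ← hCm, hCmdet', Vprod_eq_sgn_det r X]
  ring

lemma key (r : ℕ) (X : Fin r → ℂ) (B A q : ℂ) :
    Matrix.det (Matrix.of fun i j : Fin r => ent r A B q (X i) j.1)
      = Vprod r X * ∏ i : Fin r, qp q (A * B * q ^ (2 * r - 2 * (i.1 + 1))) i.1 := by
  classical
  set F : ℂ × ℂ → ℂ := fun p =>
    Matrix.det (Matrix.of fun i j : Fin r => ent r p.1 B p.2 (X i) j.1) with hF
  set G : ℂ × ℂ → ℂ := fun p =>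
    Vprod r X * ∏ i : Fin r, qp p.2 (p.1 * B * p.2 ^ (2 * r - 2 * (i.1 + 1))) i.1 with hG
  suffices h : F = G by exact congrFun h (A, q)
  set Ψ : Polynomial ℂ := ∏ i : Fin r, ∏ j ∈ Finset.Ioi i,
    (Polynomial.X ^ (r - 1 - i.1) - Polynomial.X ^ (r - 1 - j.1)) with hΨ
  have hΨne : Ψ ≠ 0 := by
    rw [hΨ, Finset.prod_ne_zero_iff]
    intro i _
    rw [Finset.prod_ne_zero_iff]
    intro j hj
    rw [Finset.mem_Ioi] at hj
    intro h
    have h1 : i.1 < j.1 := hj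
    have h2 := j.isLt
    have hlt : r - 1 - j.1 < r - 1 - i.1 := by omega
    have := congrArg (fun p => Polynomial.coeff p (r - 1 - i.1)) h
    simp [Polynomial.coeff_X_pow, hlt.ne, hlt.ne'] at this
  have hfin : {w : ℂ | Ψ.IsRoot w}.Finite := Polynomial.finite_setOf_isRoot hΨne
  have hD2 : Dense {w : ℂ | Ψ.eval w ≠ 0} := by
    have hd := hfin.countable.dense_compl ℂ
    have hset : {w : ℂ | Ψ.eval w ≠ 0} = {w : ℂ | Ψ.IsRoot w}ᶜ := by
      ext w
      simp [Polynomial.IsRoot]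
    rw [hset]
    exact hd
  have hD1 : Dense {a : ℂ | a ≠ 0} := by
    have := dense_compl_singleton (0 : ℂ)
    have hset : {a : ℂ | a ≠ 0} = ({0}ᶜ : Set ℂ) := by
      ext a
      simp
    rw [hset]
    exact this
  have hS : Dense ({a : ℂ | a ≠ 0} ×ˢ {w : ℂ | Ψ.eval w ≠ 0}) := hD1.prod hD2
  have hcF : Continuous F := by
    apply Continuous.matrix_det
    apply continuous_matrix
    intro i j
    simp only [Matrix.of_apply, ent]
    apply Continuous.mul
    · apply continuous_finset_prod
      intro s _
      fun_prop
    · apply continuous_finset_prod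
      intro s _
      fun_prop
  have hcG : Continuous G := by
    apply Continuous.mul continuous_const
    apply continuous_finset_prod
    intro i _
    unfold qp
    apply continuous_finset_prod
    intro t _
    fun_prop
  have heq : Set.EqOn F G ({a : ℂ | a ≠ 0} ×ˢ {w : ℂ | Ψ.eval w ≠ 0}) := by
    rintro ⟨a, w⟩ ⟨ha, hw⟩
    have hw' : Ψ.eval w ≠ 0 := hw
    rw [hΨ, Polynomial.eval_prod] at hw'
    have hq : ∀ i j : Fin r, i < j → w ^ (r - 1 - j.1) ≠ w ^ (r - 1 - i.1) := by
      intro i j hij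
      have h1 := Finset.prod_ne_zero_iff.mp hw' i (Finset.mem_univ i)
      rw [Polynomial.eval_prod] at h1
      have h2 := Finset.prod_ne_zero_iff.mp h1 j (Finset.mem_Ioi.mpr hij)
      simp only [Polynomial.eval_sub, Polynomial.eval_pow, Polynomial.eval_X] at h2
      exact (sub_ne_zero.mp h2).symm
    exact key_generic r a B w ha hq X
  exact Continuous.ext_on hS hcF hcG heq

end Stmt1

open Stmt1 in
theorem stmt_1 (r : ℕ) (X : Fin r → ℂ) (A B q : ℂ)
    (hX : ∀ i, X i ≠ 0)
    (hd : ∀ i, qp q (B * X i) (r - 1) ≠ 0) :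
    Matrix.det (Matrix.of fun i j : Fin r =>
      X i ^ (r - 1 - j.1) * qp q (A / X i) (r - 1 - j.1) / qp q (B * X i) (r - 1 - j.1))
    = (∏ i : Fin r, ∏ j ∈ Finset.Ioi i, (X i - X j))
      * ∏ i : Fin r,
          qp q (A * B * q ^ (2 * r - 2 * (i.1 + 1))) i.1 / qp q (B * X i) (r - 1) := by
  classical
  have hent : ∀ i j : Fin r,
      X i ^ (r - 1 - j.1) * qp q (A / X i) (r - 1 - j.1) / qp q (B * X i) (r - 1 - j.1)
        = (qp q (B * X i) (r - 1))⁻¹ * ent r A B q (X i) j.1 := by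
    intro i j
    set k := r - 1 - j.1 with hk
    have hkr : k ≤ r - 1 := Nat.sub_le _ _
    have hsplit : qp q (B * X i) (r - 1)
        = qp q (B * X i) k * ∏ s ∈ Finset.Ico k (r - 1), (1 - B * X i * q ^ s) :=
      qp_split q (B * X i) hkr
    have h1 : qp q (B * X i) k ≠ 0 := fun h => hd i (by rw [hsplit, h, zero_mul])
    have h2 : (∏ s ∈ Finset.Ico k (r - 1), (1 - B * X i * q ^ s)) ≠ 0 :=
      fun h => hd i (by rw [hsplit, h, mul_zero])
    have hxp : X i ^ k * qp q (A / X i) k = ∏ s ∈ Finset.range k, (X i - A * q ^ s) := by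
      unfold qp
      have hpow : X i ^ k = ∏ _s ∈ Finset.range k, X i := by
        rw [Finset.prod_const, Finset.card_range]
      rw [hpow, ← Finset.prod_mul_distrib]
      refine Finset.prod_congr rfl fun s _ => ?_
      field_simp [hX i]
    rw [ent, ← hxp, hsplit]
    rw [← hk]
    field_simp
    rw [mul_div_mul_right]
    simpa [mul_comm] using h2
  have hM : (Matrix.of fun i j : Fin r =>
      X i ^ (r - 1 - j.1) * qp q (A / X i) (r - 1 - j.1) / qp q (B * X i) (r - 1 - j.1))
      = Matrix.of fun i j : Fin r =>
          (fun i => (qp q (B * X i) (r - 1))⁻¹) i *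
            (Matrix.of fun i j : Fin r => ent r A B q (X i) j.1) i j := by
    ext i j
    simp only [Matrix.of_apply]
    exact hent i j
  rw [hM, Matrix.det_mul_column, key r X B A q]
  have hprodD : (∏ i : Fin r, qp q (B * X i) (r - 1)) ≠ 0 :=
    Finset.prod_ne_zero_iff.mpr fun i _ => hd i
  rw [Finset.prod_inv_distrib]
  rw [Finset.prod_div_distrib]
  rw [Vprod]
  field_simp
end

section
/- The two determinants $\det_{1\le i,j\le r}\left(\frac{(z_i;q)_{r-j}}{(a_iz_i;q)_{r-j}}\right)$ and $(-1)^{\binom r2}q^{\binom r3}\det_{1\le i,j\le r}\left(z_i^{r-j}\frac{(a_i;q)_{r-j}}{(a_iz_i;q)_{r-j}}\right)$ are equal. -/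
open Finset

/-- transition coefficients -/
noncomputable def qcoef (q : ℂ) : ℕ → ℕ → ℂ
  | 0, 0 => 1
  | 0, _+1 => 0
  | n+1, 0 => qcoef q n 0
  | n+1, m+1 => q^(m+1) * qcoef q n (m+1) - q^m * qcoef q n m

lemma qcoef_eq_zero (q : ℂ) : ∀ n m : ℕ, n < m → qcoef q n m = 0 := by
  intro n
  induction n with
  | zero => intro m hm; match m, hm with | m+1, _ => rfl
  | succ n ih =>
    intro m hm
    match m, hm with
    | m+1, hm =>
      have h1 : qcoef q n (m+1) = 0 := ih (m+1) (by omega)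
      have h2 : qcoef q n m = 0 := ih m (by omega)
      show q^(m+1) * qcoef q n (m+1) - q^m * qcoef q n m = 0
      rw [h1, h2]; ring

lemma qcoef_diag (q : ℂ) : ∀ n : ℕ, qcoef q n n = (-1)^n * q^(n.choose 2) := by
  intro n
  induction n with
  | zero => simp [qcoef]
  | succ n ih =>
    show q^(n+1) * qcoef q n (n+1) - q^n * qcoef q n n = _
    rw [qcoef_eq_zero q n (n+1) (by omega), ih]
    have : (n+1).choose 2 = n + n.choose 2 := by
      rw [Nat.choose_succ_succ, Nat.choose_one_right]
    rw [this, pow_add]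
    ring

lemma qp_key (q : ℂ) (n : ℕ) : ∀ a z : ℂ,
    qp q z n = ∑ m ∈ range (n+1),
      qcoef q n m * z^m * qp q a m * ∏ j ∈ range (n - m), (1 - a*z*q^(m+j)) := by
  induction n with
  | zero => intro a z; simp [qp, qcoef]
  | succ n ih =>
    intro a z
    have h1 : qp q z (n+1) = (1-z) * qp q (z*q) n := by
      rw [qp, qp, Finset.prod_range_succ']
      rw [mul_comm]
      congr 1
      · ring
      · apply Finset.prod_congr rfl; intro j _; ring
    rw [h1, ih a (z*q), Finset.mul_sum]
    -- define T
    set T : ℕ → ℂ := fun m => z^m * qp q a m * ∏ j ∈ range (n+1-m), (1 - a*z*q^(m+j)) with hT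
    have hterm : ∀ m ∈ range (n+1),
        (1-z) * (qcoef q n m * (z*q)^m * qp q a m * ∏ j ∈ range (n - m), (1 - a*(z*q)*q^(m+j)))
        = q^m * qcoef q n m * T m - q^m * qcoef q n m * T (m+1) := by
      intro m hm
      have hmn : m ≤ n := by simpa [Nat.lt_succ_iff] using hm
      set P : ℂ := ∏ j ∈ range (n - m), (1 - a*z*q^(m+(j+1))) with hP
      have e1 : (∏ j ∈ range (n - m), (1 - a*(z*q)*q^(m+j))) = P := by
        rw [hP]; apply Finset.prod_congr rfl; intro j _; ring
      have e2 : T m = z^m * qp q a m * (P * (1 - a*z*q^(m+0))) := by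
        have hnm : n + 1 - m = (n - m) + 1 := by omega
        rw [hT]
        simp only
        rw [hnm, Finset.prod_range_succ']
      have e3 : T (m+1) = z^(m+1) * (qp q a m * (1 - a*q^m)) * P := by
        have hnm : n + 1 - (m+1) = n - m := by omega
        rw [hT]
        simp only
        rw [hnm, qp, Finset.prod_range_succ, ← qp, hP]
        congr 1
        apply Finset.prod_congr rfl; intro j _; ring
      rw [e1, e2, e3]
      ring
    rw [Finset.sum_congr rfl hterm, Finset.sum_sub_distrib]
    have hA : ∑ m ∈ range (n+1), q^m * qcoef q n m * T m
        = ∑ m ∈ range (n+2), q^m * qcoef q n m * T m := by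
      rw [Finset.sum_range_succ (fun m => q^m * qcoef q n m * T m) (n+1)]
      rw [qcoef_eq_zero q n (n+1) (by omega)]
      ring
    have hB : ∑ m ∈ range (n+1), q^m * qcoef q n m * T (m+1)
        = ∑ m ∈ range (n+2), (if m = 0 then (0:ℂ)
            else q^(m-1) * qcoef q n (m-1) * T m) := by
      conv_rhs => rw [Finset.sum_range_succ']
      simp
    rw [hA, hB, ← Finset.sum_sub_distrib]
    apply Finset.sum_congr rfl
    intro m _
    have hTm : qcoef q (n+1) m * z^m * qp q a m * ∏ j ∈ range (n+1-m), (1 - a*z*q^(m+j))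
        = qcoef q (n+1) m * T m := by rw [hT]; ring
    rw [hTm]
    match m with
    | 0 =>
      rw [if_pos rfl]
      have hc : qcoef q (n+1) 0 = qcoef q n 0 := rfl
      rw [hc]
      ring
    | m+1 =>
      rw [if_neg (Nat.succ_ne_zero m)]
      have hc : qcoef q (n+1) (m+1) = q^(m+1) * qcoef q n (m+1) - q^m * qcoef q n m := rfl
      rw [hc]
      simp only [Nat.add_sub_cancel]
      ring

lemma qp_split (q x : ℂ) (m n : ℕ) (h : m ≤ n) :
    qp q x n = qp q x m * ∏ j ∈ range (n - m), (1 - x * q^(m+j)) := by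
  have hn : n = m + (n - m) := by omega
  rw [qp, qp]
  conv_lhs => rw [hn]
  rw [Finset.prod_range_add]

lemma qp_ne_zero_of_le (q x : ℂ) {m n : ℕ} (h : m ≤ n) (hn : qp q x n ≠ 0) :
    qp q x m ≠ 0 := by
  rw [qp_split q x m n h] at hn
  exact fun h0 => hn (by rw [h0, zero_mul])

lemma qp_div_expand (q a z : ℂ) (n : ℕ) (h : qp q (a*z) n ≠ 0) :
    qp q z n / qp q (a*z) n
      = ∑ m ∈ range (n+1), qcoef q n m * (z^m * qp q a m / qp q (a*z) m) := by
  rw [div_eq_iff h, qp_key q n a z, Finset.sum_mul]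
  apply Finset.sum_congr rfl
  intro m hm
  have hmn : m ≤ n := by simpa [Nat.lt_succ_iff] using hm
  have hsplit : qp q (a*z) n = qp q (a*z) m * ∏ j ∈ range (n - m), (1 - a*z*q^(m+j)) := by
    rw [qp_split q (a*z) m n hmn]
  have hm0 : qp q (a*z) m ≠ 0 := qp_ne_zero_of_le q (a*z) hmn h
  rw [hsplit]
  field_simp

lemma sum_range_id_choose (r : ℕ) : ∑ m ∈ range r, m = r.choose 2 := by
  induction r with
  | zero => simp
  | succ r ih =>
    have h : (r+1).choose 2 = r.choose 1 + r.choose 2 := Nat.choose_succ_succ r 1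
    rw [Finset.sum_range_succ, ih, h, Nat.choose_one_right]
    omega

lemma sum_range_choose_two (r : ℕ) : ∑ m ∈ range r, m.choose 2 = r.choose 3 := by
  induction r with
  | zero => simp
  | succ r ih =>
    have h : (r+1).choose 3 = r.choose 2 + r.choose 3 := Nat.choose_succ_succ r 2
    rw [Finset.sum_range_succ, ih, h]
    omega

theorem stmt_2 (r : ℕ) (a z : Fin r → ℂ) (q : ℂ)
    (hd : ∀ i, qp q (a i * z i) (r - 1) ≠ 0) :
    Matrix.det (Matrix.of fun i j : Fin r =>
      qp q (z i) (r - 1 - j.1) / qp q (a i * z i) (r - 1 - j.1))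
    = (-1 : ℂ) ^ r.choose 2 * q ^ r.choose 3 *
      Matrix.det (Matrix.of fun i j : Fin r =>
        z i ^ (r - 1 - j.1) * qp q (a i) (r - 1 - j.1) / qp q (a i * z i) (r - 1 - j.1)) := by
  set N : Matrix (Fin r) (Fin r) ℂ := Matrix.of fun i j : Fin r =>
      z i ^ (r - 1 - j.1) * qp q (a i) (r - 1 - j.1) / qp q (a i * z i) (r - 1 - j.1) with hN
  set L : Matrix (Fin r) (Fin r) ℂ := Matrix.of fun j' j : Fin r =>
      qcoef q (r - 1 - j.1) (r - 1 - j'.1) with hL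
  have hML : (Matrix.of fun i j : Fin r =>
      qp q (z i) (r - 1 - j.1) / qp q (a i * z i) (r - 1 - j.1)) = N * L := by
    ext i j
    rw [Matrix.mul_apply]
    simp only [hN, hL, Matrix.of_apply]
    set F : ℕ → ℂ := fun m =>
      z i ^ m * qp q (a i) m / qp q (a i * z i) m * qcoef q (r - 1 - j.1) m with hF
    have step1 : ∑ j' : Fin r, z i ^ (r - 1 - j'.1) * qp q (a i) (r - 1 - j'.1) /
          qp q (a i * z i) (r - 1 - j'.1) * qcoef q (r - 1 - j.1) (r - 1 - j'.1)
        = ∑ m ∈ range r, F m := by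
      rw [← Fin.sum_univ_eq_sum_range]
      apply Fintype.sum_bijective Fin.rev Fin.rev_bijective
      intro j'
      have h2 : (Fin.rev j').1 = r - 1 - j'.1 := by
        rw [Fin.val_rev]; omega
      rw [h2, hF]
    rw [step1]
    have hsub : range (r - 1 - j.1 + 1) ⊆ range r := by
      apply Finset.range_subset_range.mpr; omega
    have step2 : ∑ m ∈ range r, F m = ∑ m ∈ range (r - 1 - j.1 + 1), F m := by
      symm
      apply Finset.sum_subset hsub
      intro m _ hm
      have : r - 1 - j.1 < m := by
        simp only [Finset.mem_range, not_lt] at hm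
        omega
      rw [hF]
      simp only
      rw [qcoef_eq_zero q _ _ this, mul_zero]
    rw [step2, ← Finset.sum_congr rfl (fun m _ => (mul_comm (qcoef q (r-1-j.1) m) _))]
    rw [← qp_div_expand q (a i) (z i) (r - 1 - j.1)
      (qp_ne_zero_of_le q (a i * z i) (by omega) (hd i))]
  rw [hML, Matrix.det_mul]
  have hLtri : L.BlockTriangular OrderDual.toDual := by
    intro i' j' hij
    have h1 : (i' : ℕ) < j' := hij
    have : r - 1 - (j' : ℕ) < r - 1 - (i' : ℕ) := by
      have := j'.isLt; omega
    simp only [hL, Matrix.of_apply]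
    exact qcoef_eq_zero q _ _ this
  rw [Matrix.det_of_lowerTriangular L hLtri]
  have hdiag : ∀ j : Fin r, L j j = (-1:ℂ)^(r-1-j.1) * q^((r-1-j.1).choose 2) := by
    intro j
    simp only [hL, Matrix.of_apply]
    exact qcoef_diag q _
  rw [Finset.prod_congr rfl (fun j _ => hdiag j)]
  have step3 : ∏ j : Fin r, (-1:ℂ)^(r-1-j.1) * q^((r-1-j.1).choose 2)
      = ∏ m ∈ range r, (-1:ℂ)^m * q^(m.choose 2) := by
    rw [← Fin.prod_univ_eq_prod_range]
    apply Fintype.prod_bijective Fin.rev Fin.rev_bijective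
    intro j'
    have h2 : (Fin.rev j').1 = r - 1 - j'.1 := by rw [Fin.val_rev]; omega
    rw [h2]
  rw [step3, Finset.prod_mul_distrib, Finset.prod_pow_eq_pow_sum, Finset.prod_pow_eq_pow_sum,
    sum_range_id_choose, sum_range_choose_two]
  ring
end
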